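/- Let Λ(n) be the von Mangoldt function. If the Chebyshev asymptotic ∑_{n ≤ x} Λ(n) ∼ x holds as x → ∞, then the weights w_n = Λ(n)/log n (for n ≥ 2, with w_1 = 0) satisfy ∑_{n ≤ x} w_n ∼ x / log x as x → ∞. -/

import Mathlib

open Finset Real Filter ArithmeticFunction

/-- If `ψ(x) = ∑_{n ≤ x} Λ(n) ∼ x`, then the weights `w_n = Λ(n)/log n` (with `w_1 = 0`)
satisfy `∑_{n ≤ x} w_n ∼ x / log x`. -/
theorem stmt_6 (w : ℕ → ℝ)
    (hw : ∀ n : ℕ, w n = if 2 ≤ n then (ArithmeticFunction.vonMangoldt n) / Real.log n else 0)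
    (hψ : Tendsto (fun x : ℝ =>
        (∑ n ∈ Finset.Icc 1 ⌊x⌋₊, (ArithmeticFunction.vonMangoldt n : ℝ)) / x)
      atTop (nhds 1)) :
    Tendsto (fun x : ℝ =>
        (∑ n ∈ Finset.Icc 1 ⌊x⌋₊, w n) / (x / Real.log x)) atTop (nhds 1) := by
  have hIO : ∀ m : ℕ, Finset.Icc 1 m = Finset.Ioc 0 m := fun m => by
    ext a; simp; omega
  set A : ℝ → ℝ := fun t => ∑ n ∈ Finset.Icc 1 ⌊t⌋₊, (ArithmeticFunction.vonMangoldt n : ℝ)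
    with hA
  set W : ℝ → ℝ := fun t => ∑ n ∈ Finset.Icc 1 ⌊t⌋₊, w n with hW
  set y : ℝ → ℝ := fun x => x / Real.log x ^ 2 with hy
  -- y → ∞
  have h2 : Tendsto (fun x : ℝ => Real.log x ^ 2 / x) atTop (nhds 0) := by
    simpa using Real.tendsto_pow_log_div_mul_add_atTop 1 0 2 one_ne_zero
  have hy_top : Tendsto y atTop atTop := by
    have h3 : Tendsto (fun x : ℝ => Real.log x ^ 2 / x) atTop (nhdsWithin 0 (Set.Ioi 0)) := by
      refine tendsto_nhdsWithin_of_tendsto_nhds_of_eventually_within _ h2 ?_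
      filter_upwards [eventually_gt_atTop (2 : ℝ)] with x hx
      have hlx : 0 < Real.log x := Real.log_pos (by linarith)
      exact Set.mem_Ioi.2 (div_pos (pow_pos hlx 2) (by linarith))
    refine h3.inv_tendsto_nhdsGT_zero.congr fun x => ?_
    simp [hy, inv_div]
  -- A(y)/y → 1
  have hAy : Tendsto (fun x => A (y x) / y x) atTop (nhds 1) := hψ.comp hy_top
  -- log(log x)/log x → 0
  have hll : Tendsto (fun x : ℝ => Real.log (Real.log x) / Real.log x) atTop (nhds 0) := by
    have h1 : Tendsto (fun t : ℝ => Real.log t / t) atTop (nhds 0) := by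
      have := Real.tendsto_pow_log_div_mul_add_atTop 1 0 1 one_ne_zero
      simpa using this
    exact h1.comp Real.tendsto_log_atTop
  -- log x / log (y x) → 1
  have hlog : Tendsto (fun x => Real.log x / Real.log (y x)) atTop (nhds 1) := by
    have hratio : Tendsto (fun x => Real.log (y x) / Real.log x) atTop (nhds 1) := by
      have hbase : Tendsto (fun x : ℝ => 1 - 2 * (Real.log (Real.log x) / Real.log x)) atTop
          (nhds 1) := by
        have := (tendsto_const_nhds (x := (1:ℝ)) (f := atTop)).sub
          ((tendsto_const_nhds (x := (2:ℝ)) (f := atTop)).mul hll)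
        simpa using this
      refine hbase.congr' ?_
      filter_upwards [eventually_gt_atTop (3 : ℝ)] with x hx
      have hlx : 1 < Real.log x := by
        have h9 := Real.exp_one_lt_d9
        have : Real.log (Real.exp 1) < Real.log x :=
          Real.log_lt_log (Real.exp_pos 1) (by linarith)
        simpa using this
      have hx0 : (0:ℝ) < x := by linarith
      have hlogy : Real.log (y x) = Real.log x - 2 * Real.log (Real.log x) := by
        simp only [hy]
        rw [Real.log_div (ne_of_gt hx0) (by positivity), Real.log_pow]
        push_cast; ring
      rw [hlogy]
      field_simp
    have h1 : Tendsto (fun x => (Real.log (y x) / Real.log x)⁻¹) atTop (nhds 1) := by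
      simpa using hratio.inv₀ one_ne_zero
    refine h1.congr fun x => ?_
    rw [inv_div]
  -- 1/(log x * log 2) → 0
  have h0 : Tendsto (fun x : ℝ => 1 / (Real.log x * Real.log 2)) atTop (nhds 0) := by
    have hm : Tendsto (fun x : ℝ => Real.log x * Real.log 2) atTop atTop :=
      Tendsto.atTop_mul_const (Real.log_pos one_lt_two) Real.tendsto_log_atTop
    refine hm.inv_tendsto_atTop.congr fun x => ?_
    simp [one_div]
  -- Upper limit function
  have hU : Tendsto (fun x => A (y x) / y x * (1 / (Real.log x * Real.log 2))
      + A x / x * (Real.log x / Real.log (y x))) atTop (nhds 1) := by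
    have := (hAy.mul h0).add (hψ.mul hlog)
    simpa using this
  have hL : Tendsto (fun x => A x / x) atTop (nhds 1) := hψ
  -- squeeze
  have key : Tendsto (fun x => W x * Real.log x / x) atTop (nhds 1) := by
    refine tendsto_of_tendsto_of_tendsto_of_le_of_le' hL hU ?_ ?_
    · -- lower bound : A x / x ≤ W x * log x / x
      filter_upwards [eventually_ge_atTop (2 : ℝ)] with x hx
      have hx0 : (0:ℝ) < x := by linarith
      gcongr
      simp only [hA, hW, Finset.sum_mul]
      refine Finset.sum_le_sum fun n hn => ?_
      simp only [Finset.mem_Icc] at hn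
      rcases le_or_gt 2 n with h2n | h2n
      · rw [hw n, if_pos h2n]
        have hln : 0 < Real.log n := Real.log_pos (by exact_mod_cast h2n)
        rw [div_mul_eq_mul_div, le_div_iff₀ hln]
        refine mul_le_mul_of_nonneg_left ?_ vonMangoldt_nonneg
        refine Real.log_le_log (by positivity) ?_
        exact le_trans (by exact_mod_cast hn.2) (Nat.floor_le hx0.le)
      · obtain rfl : n = 1 := by omega
        rw [hw]
        norm_num [ArithmeticFunction.vonMangoldt_apply_one]
    · -- upper bound
      filter_upwards [hy_top.eventually_ge_atTop 2, eventually_ge_atTop (3:ℝ),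
        Real.tendsto_log_atTop.eventually_ge_atTop 1] with x hyx2 hx3 hlx1
      have hx0 : (0:ℝ) < x := by linarith
      have hlx : 0 < Real.log x := by linarith
      have hly0 : 0 < Real.log (y x) := Real.log_pos (by linarith)
      have hyx : y x ≤ x := by
        simp only [hy]
        exact div_le_self hx0.le (by nlinarith)
      have hfl : ⌊y x⌋₊ ≤ ⌊x⌋₊ := Nat.floor_le_floor hyx
      -- split the sum
      have hsplit : W x = (∑ n ∈ Finset.Icc 1 ⌊y x⌋₊, w n)
          + ∑ n ∈ Finset.Ioc ⌊y x⌋₊ ⌊x⌋₊, w n := by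
        simp only [hW, hIO]
        exact (Finset.sum_Ioc_consecutive _ (Nat.zero_le _) hfl).symm
      have hb1 : (∑ n ∈ Finset.Icc 1 ⌊y x⌋₊, w n) ≤ A (y x) / Real.log 2 := by
        simp only [hA]
        rw [Finset.sum_div]
        refine Finset.sum_le_sum fun n hn => ?_
        simp only [Finset.mem_Icc] at hn
        rcases le_or_gt 2 n with h2n | h2n
        · rw [hw n, if_pos h2n]
          exact div_le_div_of_nonneg_left vonMangoldt_nonneg (Real.log_pos one_lt_two)
            (Real.log_le_log (by positivity) (by exact_mod_cast h2n))
        · obtain rfl : n = 1 := by omega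
          rw [hw]
          norm_num [ArithmeticFunction.vonMangoldt_apply_one]
      have hb2 : (∑ n ∈ Finset.Ioc ⌊y x⌋₊ ⌊x⌋₊, w n) ≤ A x / Real.log (y x) := by
        have step1 : (∑ n ∈ Finset.Ioc ⌊y x⌋₊ ⌊x⌋₊, w n)
            ≤ ∑ n ∈ Finset.Ioc ⌊y x⌋₊ ⌊x⌋₊, (vonMangoldt n : ℝ) / Real.log (y x) := by
          refine Finset.sum_le_sum fun n hn => ?_
          simp only [Finset.mem_Ioc] at hn
          have hfy2 : 2 ≤ ⌊y x⌋₊ := Nat.le_floor (by exact_mod_cast hyx2)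
          have h2n : 2 ≤ n := by omega
          rw [hw n, if_pos h2n]
          refine div_le_div_of_nonneg_left vonMangoldt_nonneg hly0
            (Real.log_le_log (by linarith) ?_)
          calc y x ≤ ⌊y x⌋₊ + 1 := (Nat.lt_floor_add_one _).le
          _ ≤ (n : ℝ) := by exact_mod_cast hn.1
        refine step1.trans ?_
        rw [← Finset.sum_div]
        gcongr
        simp only [hA]
        refine Finset.sum_le_sum_of_subset_of_nonneg ?_
          (fun n _ _ => vonMangoldt_nonneg)
        intro n hn
        simp only [Finset.mem_Ioc, Finset.mem_Icc] at hn ⊢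
        omega
      have htot : W x ≤ A (y x) / Real.log 2 + A x / Real.log (y x) := by
        rw [hsplit]; exact add_le_add hb1 hb2
      calc W x * Real.log x / x
          ≤ (A (y x) / Real.log 2 + A x / Real.log (y x)) * Real.log x / x := by
            gcongr
        _ = A (y x) / y x * (1 / (Real.log x * Real.log 2))
            + A x / x * (Real.log x / Real.log (y x)) := by
            have hl2 : Real.log 2 ≠ 0 := ne_of_gt (Real.log_pos one_lt_two)
            have hyx_eq : y x = x / Real.log x ^ 2 := rfl
            rw [hyx_eq]
            field_simp
  -- conclude
  refine key.congr' ?_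
  filter_upwards [eventually_ge_atTop (2 : ℝ)] with x hx
  rw [div_div_eq_mul_div]
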